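/- Let H be a traceless Hermitian matrix, let δ > 0, and suppose that for each t = 1,…,T a unit vector ψ_t satisfies ⟨ψ_t|H|ψ_t⟩² ≤ δ. Let a > 0 with 9a²δ ≤ 0.79 and 3a‖H‖₂ ≤ 1. Then E_x[∏_{t=1}^T (1 + 3a·x·⟨ψ_t|H|ψ_t⟩)] ≥ exp(−9a²Tδ) ≥ 1 − 9Ta²δ, where x is uniform on {+1, −1}. -/

import Mathlib

open Matrix BigOperators

noncomputable def specNorm {d : ℕ} (A : Matrix (Fin d) (Fin d) ℂ) : ℝ :=
  ‖Matrix.toEuclideanCLM (𝕜 := ℂ) A‖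

lemma exp_neg_two_le (u : ℝ) (h0 : 0 ≤ u) (h1 : u ≤ 0.79) :
    Real.exp (-(2*u)) ≤ 1 - u := by
  have hS : 1 + 2*u + 2*u^2 + (4/3)*u^3 + (2/3)*u^4 + (4/15)*u^5 ≤ Real.exp (2*u) := by
    have := Real.sum_le_exp_of_nonneg (x := 2*u) (by linarith) 6
    simp [Finset.sum_range_succ, Nat.factorial] at this
    nlinarith [this]
  have hSpos : (0:ℝ) < 1 + 2*u + 2*u^2 + (4/3)*u^3 + (2/3)*u^4 + (4/15)*u^5 := by positivity
  rw [Real.exp_neg]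
  have h3 : (Real.exp (2*u))⁻¹ ≤ (1 + 2*u + 2*u^2 + (4/3)*u^3 + (2/3)*u^4 + (4/15)*u^5)⁻¹ :=
    inv_anti₀ hSpos hS
  refine h3.trans ?_
  rw [inv_le_iff_one_le_mul₀ hSpos]
  nlinarith [pow_nonneg h0 3, pow_nonneg h0 4, pow_nonneg h0 5, sq_nonneg u,
    mul_nonneg (mul_nonneg h0 h0) h0]

theorem stmt11 {d T : ℕ} (H : Matrix (Fin d) (Fin d) ℂ) (hH : H.IsHermitian)
    (htr : H.trace = 0) (δ a : ℝ) (hδ : 0 < δ)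
    (ψ : Fin T → EuclideanSpace ℂ (Fin d)) (hψ : ∀ t, ‖ψ t‖ = 1)
    (c : Fin T → ℝ)
    (hc : ∀ t, (c t : ℂ) = inner ℂ (ψ t) (Matrix.toEuclideanCLM (𝕜 := ℂ) H (ψ t)))
    (hcδ : ∀ t, (c t) ^ 2 ≤ δ)
    (ha : 0 < a) (ha1 : 9 * a ^ 2 * δ ≤ 0.79) (ha2 : 3 * a * specNorm H ≤ 1) :
    Real.exp (-(9 * a ^ 2 * T * δ)) ≤
      (1 / 2) * ∏ t, (1 + 3 * a * c t) + (1 / 2) * ∏ t, (1 - 3 * a * c t) ∧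
    1 - 9 * T * a ^ 2 * δ ≤ Real.exp (-(9 * a ^ 2 * T * δ)) := by
  constructor
  · -- bound |3 a c t| ≤ 1
    have hcb : ∀ t, |3 * a * c t| ≤ 1 := by
      intro t
      have h1 : |c t| ≤ specNorm H := by
        have : ‖(c t : ℂ)‖ ≤ specNorm H := by
          rw [hc t]
          calc ‖(inner ℂ (ψ t) (Matrix.toEuclideanCLM (𝕜 := ℂ) H (ψ t)) : ℂ)‖
              ≤ ‖ψ t‖ * ‖Matrix.toEuclideanCLM (𝕜 := ℂ) H (ψ t)‖ := norm_inner_le_norm _ _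
            _ ≤ ‖ψ t‖ * (specNorm H * ‖ψ t‖) := by
                gcongr
                exact (Matrix.toEuclideanCLM (𝕜 := ℂ) H).le_opNorm _
            _ = specNorm H := by rw [hψ t]; ring
        simpa using this
      have : 0 ≤ specNorm H := (abs_nonneg _).trans h1
      rw [abs_mul, abs_of_pos (by positivity : (0:ℝ) < 3*a)] at *
      nlinarith
    have hfac1 : ∀ t, (0:ℝ) ≤ 1 + 3 * a * c t := fun t => by
      have := abs_le.1 (hcb t); linarith [this.1]
    have hfac2 : ∀ t, (0:ℝ) ≤ 1 - 3 * a * c t := fun t => by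
      have := abs_le.1 (hcb t); linarith [this.2]
    set P := ∏ t, (1 + 3 * a * c t) with hP
    set Q := ∏ t, (1 - 3 * a * c t) with hQ
    have hPn : 0 ≤ P := Finset.prod_nonneg fun t _ => hfac1 t
    have hQn : 0 ≤ Q := Finset.prod_nonneg fun t _ => hfac2 t
    -- product lower bound
    have hPQ : Real.exp (-(2 * (9 * a^2 * δ))) ^ T ≤ P * Q := by
      rw [hP, hQ, ← Finset.prod_mul_distrib]
      have hconst : Real.exp (-(2 * (9 * a^2 * δ))) ^ T = ∏ _t : Fin T, Real.exp (-(2 * (9 * a^2 * δ))) := by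
        simp [Finset.prod_const]
      rw [hconst]
      apply Finset.prod_le_prod
      · intro t _; positivity
      · intro t _
        have h1 : (1 + 3*a*c t) * (1 - 3*a*c t) = 1 - 9*a^2*(c t)^2 := by ring
        rw [h1]
        refine (exp_neg_two_le (9*a^2*δ) (by positivity) ha1).trans ?_
        have := hcδ t
        nlinarith [sq_nonneg a]
    have hPQ' : Real.exp (-(9 * a ^ 2 * T * δ)) ^ 2 ≤ P * Q := by
      refine le_trans (le_of_eq ?_) hPQ
      rw [← Real.exp_nat_mul, ← Real.exp_nat_mul]
      · congr 1; push_cast; ring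
    -- AM-GM
    have hs : Real.exp (-(9 * a ^ 2 * T * δ)) ≤ Real.sqrt (P * Q) := by
      rw [show Real.exp (-(9 * a ^ 2 * T * δ)) = Real.sqrt (Real.exp (-(9 * a ^ 2 * T * δ)) ^ 2) by
        rw [Real.sqrt_sq (Real.exp_nonneg _)]]
      exact Real.sqrt_le_sqrt hPQ'
    refine hs.trans ?_
    rw [Real.sqrt_mul hPn]
    nlinarith [sq_nonneg (Real.sqrt P - Real.sqrt Q), Real.sq_sqrt hPn, Real.sq_sqrt hQn,
      Real.sqrt_nonneg P, Real.sqrt_nonneg Q]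
  · have := Real.add_one_le_exp (-(9 * a ^ 2 * T * δ))
    have h : (9:ℝ) * T * a^2 * δ = 9 * a^2 * T * δ := by ring
    linarith
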